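/- For any ξ, η ∈ ℝ and u, v ∈ 𝔻, if |λ + 1| > 2ρ(u,v), where λ = e^{i(η−ξ)}·(1−ū·v)/(1−u·v̄) and ρ(u,v) = |(u−v)/(1−ū·v)|, then sup_{z∈𝔻} |f_{ξ,u}(z) − f_{η,v}(z)| = |(1 − 2ρ(u,v)² − 2i·ρ(u,v)·√(1−ρ(u,v)²)) − (Re λ + i·|Im λ|)|. -/

import Mathlib

open Complex

noncomputable section

def unitDisk : Set ℂ := {z : ℂ | ‖z‖ < 1}

noncomputable def autMap (ξ : ℝ) (u z : ℂ) : ℂ :=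
  Complex.exp (Complex.I * ξ) * ((z - u) / (1 - (starRingEnd ℂ) u * z))

noncomputable def pseudoHyp (u v : ℂ) : ℝ :=
  ‖((u - v) / (1 - (starRingEnd ℂ) u * v))‖

def Complex.abs : AbsoluteValue ℂ ℝ where
  toFun z := ‖z‖
  map_mul' := norm_mul
  nonneg' := norm_nonneg
  eq_zero' _ := norm_eq_zero
  add_le' := norm_add_le

lemma Complex.abs_conj (z : ℂ) : Complex.abs ((starRingEnd ℂ) z) = Complex.abs z :=
  Complex.norm_conj z

lemma Complex.abs_exp_ofReal_mul_I (x : ℝ) : Complex.abs (Complex.exp (x * Complex.I)) = 1 :=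
  Complex.norm_exp_ofReal_mul_I x

lemma Complex.abs_mul_exp_arg_mul_I (x : ℂ) :
    (Complex.abs x : ℂ) * Complex.exp (x.arg * Complex.I) = x :=
  Complex.norm_mul_exp_arg_mul_I x

lemma Complex.abs_ofReal (r : ℝ) : Complex.abs (r : ℂ) = |r| := Complex.norm_real r

lemma Complex.abs_add_mul_I (x y : ℝ) :
    Complex.abs (x + y * Complex.I) = Real.sqrt (x ^ 2 + y ^ 2) :=
  Complex.norm_add_mul_I x y

lemma Complex.continuous_abs : Continuous Complex.abs := continuous_norm

lemma Complex.norm_eq_abs (z : ℂ) : ‖z‖ = Complex.abs z := rfl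

lemma Complex.sq_abs (z : ℂ) : Complex.abs z ^ 2 = Complex.normSq z := Complex.sq_norm z

lemma Complex.normSq_eq_abs (z : ℂ) : Complex.normSq z = Complex.abs z ^ 2 :=
  Complex.normSq_eq_norm_sq z

lemma Complex.abs_apply (z : ℂ) : Complex.abs z = Real.sqrt (Complex.normSq z) := rfl

private lemma one_sub_mul_ne {w z : ℂ} (hw : Complex.abs w < 1) (hz : Complex.abs z ≤ 1) :
    (1 : ℂ) - w * z ≠ 0 := by
  intro h
  have h1 : (1 : ℂ) = w * z := by linear_combination h
  have h2 := congrArg Complex.abs h1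
  rw [map_one, map_mul] at h2
  nlinarith [Complex.abs.nonneg w, Complex.abs.nonneg z]

private lemma abs_sub_lt_abs_one_sub {u v : ℂ} (hu : Complex.abs u < 1)
    (hv : Complex.abs v < 1) :
    Complex.abs (u - v) < Complex.abs (1 - (starRingEnd ℂ) u * v) := by
  have e1 : Complex.normSq (1 - (starRingEnd ℂ) u * v) - Complex.normSq (u - v)
      = (1 - Complex.normSq u) * (1 - Complex.normSq v) := by
    simp only [Complex.normSq_apply, Complex.sub_re, Complex.sub_im, Complex.mul_re,
      Complex.mul_im, Complex.one_re, Complex.one_im, Complex.conj_re, Complex.conj_im]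
    ring
  have h2 : Complex.normSq u < 1 := by
    rw [Complex.normSq_eq_abs]; nlinarith [Complex.abs.nonneg u]
  have h3 : Complex.normSq v < 1 := by
    rw [Complex.normSq_eq_abs]; nlinarith [Complex.abs.nonneg v]
  have h4 := Complex.normSq_nonneg u
  have h5 := Complex.normSq_nonneg v
  have h1 : Complex.normSq (u - v) < Complex.normSq (1 - (starRingEnd ℂ) u * v) := by nlinarith
  rw [Complex.abs_apply, Complex.abs_apply]
  exact Real.sqrt_lt_sqrt (Complex.normSq_nonneg _) h1

private lemma keyA (u v z cu cv : ℂ)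
    (h1 : 1 - cu * z ≠ 0) (h2 : 1 - cv * z ≠ 0) (h3 : z - v ≠ 0) (h4 : 1 - cv * u ≠ 0)
    (h5 : 1 - v * cu ≠ 0)
    (hBD : (z - v) / (1 - cv * z)
        * (1 - (cu - cv) / (1 - v * cu) * ((z - v) / (1 - cv * z))) ≠ 0) :
    ((z - v) / (1 - cv * z) - (u - v) / (1 - cv * u))
      / ((z - v) / (1 - cv * z) * (1 - (cu - cv) / (1 - v * cu) * ((z - v) / (1 - cv * z))))
    = (z - u) * (1 - v * cu) * (1 - cv * z) / ((1 - cv * u) * ((z - v) * (1 - cu * z))) := by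
  rw [div_eq_div_iff hBD (by exact mul_ne_zero h4 (mul_ne_zero h3 h1))]
  have h1' : 1 - z * cu ≠ 0 := by rwa [mul_comm]
  have h2' : 1 - z * cv ≠ 0 := by rwa [mul_comm]
  have h4' : 1 - u * cv ≠ 0 := by rwa [mul_comm]
  have h5' : 1 - cu * v ≠ 0 := by rwa [mul_comm]
  field_simp
  ring

private lemma keyB (u v z cu cv E F : ℂ)
    (h1 : 1 - cu * z ≠ 0) (h2 : 1 - cv * z ≠ 0) (h3 : z - v ≠ 0) (h4 : 1 - cv * u ≠ 0)
    (h5 : 1 - v * cu ≠ 0) (h6 : 1 - cu * v ≠ 0) :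
    E * F * ((z - u) / (1 - cu * z)) - E * ((z - v) / (1 - cv * z))
      = E * ((z - v) / (1 - cv * z))
        * (F * ((1 - u * cv) / (1 - cu * v))
            * ((z - u) * (1 - v * cu) * (1 - cv * z) / ((1 - cv * u) * ((z - v) * (1 - cu * z))))
          - 1) := by
  have e1 : F * ((1 - u * cv) / (1 - cu * v))
        * ((z - u) * (1 - v * cu) * (1 - cv * z) / ((1 - cv * u) * ((z - v) * (1 - cu * z))))
      = F * ((z - u) * (1 - cv * z) / ((z - v) * (1 - cu * z))) := by
    rw [mul_assoc, div_mul_div_comm]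
    congr 1
    rw [div_eq_div_iff (mul_ne_zero h6 (mul_ne_zero h4 (mul_ne_zero h3 h1)))
      (mul_ne_zero h3 h1)]
    ring
  have e2 : E * ((z - v) / (1 - cv * z))
        * (F * ((z - u) * (1 - cv * z) / ((z - v) * (1 - cu * z))))
      = E * F * ((z - u) / (1 - cu * z)) * 1 := by
    have h1' : 1 - z * cu ≠ 0 := by rwa [mul_comm]
    have h2' : 1 - z * cv ≠ 0 := by rwa [mul_comm]
    field_simp
  rw [e1, mul_sub, e2]
  ring

set_option maxHeartbeats 4000000 in
theorem dist_formula_case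
    (ξ η : ℝ) (u v : ℂ) (hu : u ∈ unitDisk) (hv : v ∈ unitDisk)
    (hcond : ‖(Complex.exp (Complex.I * (η - ξ))
          * ((1 - (starRingEnd ℂ) u * v) / (1 - u * (starRingEnd ℂ) v)) + 1)‖
      > 2 * pseudoHyp u v) :
    (⨆ z : unitDisk, ‖(autMap ξ u z - autMap η v z)‖)
      = ‖((1 - 2 * (pseudoHyp u v : ℂ) ^ 2
              - 2 * Complex.I * (pseudoHyp u v : ℂ)
                * (Real.sqrt (1 - pseudoHyp u v ^ 2) : ℂ))
            - (((Complex.exp (Complex.I * (η - ξ))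
                  * ((1 - (starRingEnd ℂ) u * v) / (1 - u * (starRingEnd ℂ) v))).re : ℂ)
               + Complex.I
                  * (((|(Complex.exp (Complex.I * (η - ξ))
                      * ((1 - (starRingEnd ℂ) u * v)
                          / (1 - u * (starRingEnd ℂ) v))).im| : ℝ)) : ℂ)))‖ := by
  have hu1 : Complex.abs u < 1 := hu
  have hv1 : Complex.abs v < 1 := hv
  set ρ : ℝ := pseudoHyp u v with hρdef
  set lam : ℂ := Complex.exp (Complex.I * (η - ξ))
    * ((1 - (starRingEnd ℂ) u * v) / (1 - u * (starRingEnd ℂ) v)) with hlamdef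
  set s : ℝ := Real.sqrt (1 - ρ ^ 2) with hsdef
  set RHSval : ℝ := Complex.abs
          ((1 - 2 * (ρ : ℂ) ^ 2 - 2 * Complex.I * (ρ : ℂ) * (s : ℂ))
            - ((lam.re : ℂ) + Complex.I * ((|lam.im| : ℝ) : ℂ))) with hRHSdef
  show (⨆ z : unitDisk, Complex.abs (autMap ξ u ↑z - autMap η v ↑z)) = RHSval
  clear_value ρ lam s RHSval
  -- basic nonvanishing and bounds
  have hcu1 : Complex.abs ((starRingEnd ℂ) u) < 1 := by rwa [Complex.abs_conj]
  have hcv1 : Complex.abs ((starRingEnd ℂ) v) < 1 := by rwa [Complex.abs_conj]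
  have huv : (1 : ℂ) - (starRingEnd ℂ) u * v ≠ 0 := one_sub_mul_ne hcu1 hv1.le
  have hvu : (1 : ℂ) - u * (starRingEnd ℂ) v ≠ 0 := by
    rw [mul_comm]; exact one_sub_mul_ne hcv1 hu1.le
  have hvu' : (1 : ℂ) - (starRingEnd ℂ) v * u ≠ 0 := one_sub_mul_ne hcv1 hu1.le
  have hρ0 : 0 ≤ ρ := by rw [hρdef]; exact Complex.abs.nonneg _
  have hρ1 : ρ < 1 := by
    rw [hρdef]
    unfold pseudoHyp
    change Complex.abs _ < 1
    rw [map_div₀, div_lt_one (Complex.abs.pos huv)]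
    exact abs_sub_lt_abs_one_sub hu1 hv1
  have hs2 : s ^ 2 = 1 - ρ ^ 2 := by rw [hsdef]; exact Real.sq_sqrt (by nlinarith)
  have hs0 : 0 ≤ s := by rw [hsdef]; exact Real.sqrt_nonneg _
  have hexp1 : ∀ t : ℝ, Complex.abs (Complex.exp (Complex.I * (t : ℂ))) = 1 := by
    intro t
    rw [show Complex.I * (t : ℂ) = (t : ℂ) * Complex.I by ring, Complex.abs_exp_ofReal_mul_I]
  have hconj1uv : (starRingEnd ℂ) (1 - (starRingEnd ℂ) u * v) = 1 - u * (starRingEnd ℂ) v := by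
    rw [map_sub, map_mul, Complex.conj_conj, map_one]
  have hlam1 : Complex.abs lam = 1 := by
    rw [hlamdef, map_mul, map_div₀]
    rw [show Complex.I * ((η : ℂ) - (ξ : ℂ)) = Complex.I * ((η - ξ : ℝ) : ℂ) by push_cast; ring]
    rw [hexp1, ← hconj1uv, Complex.abs_conj, one_mul, div_self]
    exact (Complex.abs.pos huv).ne'
  have hlamne : lam ≠ 0 := by
    intro h; rw [h, map_zero] at hlam1; norm_num at hlam1
  have hl2 : lam.re ^ 2 + lam.im ^ 2 = 1 := by
    have h := Complex.normSq_eq_abs lam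
    rw [hlam1, Complex.normSq_apply] at h
    linear_combination h
  set θ : ℝ := |lam.arg| with hθdef
  set α : ℝ := Real.arccos (1 - 2 * ρ ^ 2) with hαdef
  have hθ0 : 0 ≤ θ := abs_nonneg _
  have hθπ : θ ≤ Real.pi := Complex.abs_arg_le_pi lam
  have hα0 : 0 ≤ α := Real.arccos_nonneg _
  have hαπ : α ≤ Real.pi := Real.arccos_le_pi _
  have hα1 : Real.cos α = 1 - 2 * ρ ^ 2 := Real.cos_arccos (by nlinarith) (by nlinarith)
  have hα2 : Real.sin α = 2 * ρ * s := by
    rw [hαdef, Real.sin_arccos,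
      show 1 - (1 - 2 * ρ ^ 2) ^ 2 = (2 * ρ * s) ^ 2 by nlinarith [hs2]]
    exact Real.sqrt_sq (by positivity)
  have hre : lam.re = Real.cos θ := by
    rw [hθdef, Real.cos_abs, Complex.cos_arg hlamne, Complex.norm_eq_abs, hlam1, div_one]
  have him : |lam.im| = Real.sin θ := by
    have hsin := Complex.sin_arg lam
    rw [Complex.norm_eq_abs, hlam1, div_one] at hsin
    rcases le_or_gt 0 lam.im with h | h
    · rw [_root_.abs_of_nonneg h, hθdef, _root_.abs_of_nonneg (Complex.arg_nonneg_iff.mpr h), hsin]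
    · rw [_root_.abs_of_neg h, hθdef, _root_.abs_of_neg (Complex.arg_neg_iff.mpr h), Real.sin_neg, hsin]
  clear_value θ α
  -- the hypothesis gives θ + α < π
  have hsum : θ + α < Real.pi := by
    have h1 : Complex.abs (lam + 1) ^ 2 = 2 + 2 * lam.re := by
      rw [Complex.sq_abs, Complex.normSq_apply]
      simp only [Complex.add_re, Complex.add_im, Complex.one_re, Complex.one_im]
      linear_combination hl2
    have h2 : 2 * ρ < Complex.abs (lam + 1) := hcond
    have h3 : Real.cos (Real.pi - α) < Real.cos θ := by
      rw [Real.cos_pi_sub, hα1, ← hre]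
      nlinarith [Complex.abs.nonneg (lam + 1)]
    by_contra hc
    push_neg at hc
    have h4 : Real.cos θ ≤ Real.cos (Real.pi - α) :=
      Real.cos_le_cos_of_nonneg_of_le_pi (by linarith) (by linarith) (by linarith)
    linarith
  -- the RHS value squared
  have him2 : |lam.im| ^ 2 = lam.im ^ 2 := sq_abs _
  have hM2 : RHSval ^ 2 = 2 - 2 * Real.cos (θ + α) := by
    have hCeq : (1 - 2 * (ρ : ℂ) ^ 2 - 2 * Complex.I * (ρ : ℂ) * (s : ℂ)
          - ((lam.re : ℂ) + Complex.I * ((|lam.im| : ℝ) : ℂ)))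
        = ((1 - 2 * ρ ^ 2 - lam.re : ℝ) : ℂ) + ((-(2 * ρ * s) - |lam.im| : ℝ) : ℂ) * Complex.I := by
      push_cast; ring
    rw [hRHSdef, hCeq, Complex.sq_abs, Complex.normSq_add_mul_I]
    rw [Real.cos_add, ← hre, ← him, hα1, hα2]
    linear_combination hl2 + him2 + 4 * ρ ^ 2 * hs2
  -- the Möbius parameter a
  set a : ℂ := (u - v) / (1 - (starRingEnd ℂ) v * u) with hadef
  have ha : Complex.abs a = ρ := by
    rw [hadef, hρdef]
    unfold pseudoHyp
    change Complex.abs _ = Complex.abs _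
    rw [map_div₀, map_div₀]
    congr 1
    rw [show (1 : ℂ) - (starRingEnd ℂ) v * u = (starRingEnd ℂ) (1 - (starRingEnd ℂ) u * v) by
      rw [map_sub, map_one, map_mul, Complex.conj_conj]; ring, Complex.abs_conj]
  clear_value a
  have hca1 : Complex.abs ((starRingEnd ℂ) a) < 1 := by rw [Complex.abs_conj, ha]; exact hρ1
  have hvu'' : (1 : ℂ) - v * (starRingEnd ℂ) u ≠ 0 := by
    rw [mul_comm]; exact one_sub_mul_ne hcu1 hv1.le
  have hconja : (starRingEnd ℂ) a
      = ((starRingEnd ℂ) u - (starRingEnd ℂ) v) / (1 - v * (starRingEnd ℂ) u) := by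
    rw [hadef, map_div₀, map_sub, map_sub, map_one, map_mul, Complex.conj_conj]
  have hconjlam : (starRingEnd ℂ) lam = Complex.exp (Complex.I * ((ξ : ℂ) - (η : ℂ)))
      * ((1 - u * (starRingEnd ℂ) v) / (1 - (starRingEnd ℂ) u * v)) := by
    rw [hlamdef, map_mul, map_div₀, hconj1uv, ← Complex.exp_conj]
    congr 2
    · rw [map_mul, Complex.conj_I, map_sub, Complex.conj_ofReal, Complex.conj_ofReal]; ring
    · rw [map_sub, map_one, map_mul, Complex.conj_conj]
  have hexpadd : Complex.exp (Complex.I * (ξ : ℂ))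
      = Complex.exp (Complex.I * (η : ℂ)) * Complex.exp (Complex.I * ((ξ : ℂ) - (η : ℂ))) := by
    rw [← Complex.exp_add]; congr 1; ring
  have hRHS0 : 0 ≤ RHSval := by rw [hRHSdef]; exact Complex.abs.nonneg _
  -- abs of the Blaschke factor on the circle
  have hBfact : ∀ z : ℂ, Complex.abs z = 1 →
      Complex.abs ((z - v) / (1 - (starRingEnd ℂ) v * z)) = 1 := by
    intro z hz
    have hzv : z - v ≠ 0 := by
      intro h0
      have hzv' : z = v := by linear_combination h0
      have habsv : Complex.abs v = 1 := hzv' ▸ hz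
      rw [habsv] at hv1; exact lt_irrefl _ hv1
    have hzz : z * (starRingEnd ℂ) z = 1 := by
      rw [Complex.mul_conj, Complex.normSq_eq_abs, hz]; norm_num
    have hcirc : (1 : ℂ) - (starRingEnd ℂ) v * z = z * (starRingEnd ℂ) (z - v) := by
      rw [map_sub]; linear_combination -hzz
    rw [map_div₀, hcirc, map_mul, Complex.abs_conj, hz, one_mul, div_self]
    exact Complex.abs.ne_zero hzv
  -- the key factorization on the unit circle
  have hkey : ∀ z : ℂ, Complex.abs z = 1 →
      autMap ξ u z - autMap η v z
        = Complex.exp (Complex.I * (η : ℂ)) * ((z - v) / (1 - (starRingEnd ℂ) v * z))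
          * ((starRingEnd ℂ) lam
              * ((starRingEnd ℂ)
                    (1 - (starRingEnd ℂ) a * ((z - v) / (1 - (starRingEnd ℂ) v * z)))
                  / (1 - (starRingEnd ℂ) a * ((z - v) / (1 - (starRingEnd ℂ) v * z)))) - 1) := by
    intro z hz
    have hcvz : (1 : ℂ) - (starRingEnd ℂ) v * z ≠ 0 := one_sub_mul_ne hcv1 hz.le
    have hcuz : (1 : ℂ) - (starRingEnd ℂ) u * z ≠ 0 := one_sub_mul_ne hcu1 hz.le
    have hzv : z - v ≠ 0 := by
      intro h0
      have hzv' : z = v := by linear_combination h0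
      have habsv : Complex.abs v = 1 := hzv' ▸ hz
      rw [habsv] at hv1; exact lt_irrefl _ hv1
    have hBabs : Complex.abs ((z - v) / (1 - (starRingEnd ℂ) v * z)) = 1 := hBfact z hz
    have hBne : (z - v) / (1 - (starRingEnd ℂ) v * z) ≠ 0 := by
      intro h0; rw [h0, map_zero] at hBabs; norm_num at hBabs
    have hBB : (z - v) / (1 - (starRingEnd ℂ) v * z)
        * (starRingEnd ℂ) ((z - v) / (1 - (starRingEnd ℂ) v * z)) = 1 := by
      rw [Complex.mul_conj, Complex.normSq_eq_abs, hBabs]; norm_num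
    have hD : (1 : ℂ) - (starRingEnd ℂ) a * ((z - v) / (1 - (starRingEnd ℂ) v * z)) ≠ 0 :=
      one_sub_mul_ne hca1 (le_of_eq hBabs)
    have h1 : (z - v) / (1 - (starRingEnd ℂ) v * z)
        * (starRingEnd ℂ)
            (1 - (starRingEnd ℂ) a * ((z - v) / (1 - (starRingEnd ℂ) v * z)))
        = (z - v) / (1 - (starRingEnd ℂ) v * z) - a := by
      rw [map_sub, map_one, map_mul, Complex.conj_conj]
      linear_combination -a * hBB
    have hmu : (starRingEnd ℂ)
          (1 - (starRingEnd ℂ) a * ((z - v) / (1 - (starRingEnd ℂ) v * z)))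
          / (1 - (starRingEnd ℂ) a * ((z - v) / (1 - (starRingEnd ℂ) v * z)))
        = ((z - v) / (1 - (starRingEnd ℂ) v * z) - a)
          / ((z - v) / (1 - (starRingEnd ℂ) v * z)
              * (1 - (starRingEnd ℂ) a * ((z - v) / (1 - (starRingEnd ℂ) v * z)))) := by
      rw [← mul_div_mul_left ((starRingEnd ℂ)
          (1 - (starRingEnd ℂ) a * ((z - v) / (1 - (starRingEnd ℂ) v * z))))
          (1 - (starRingEnd ℂ) a * ((z - v) / (1 - (starRingEnd ℂ) v * z))) hBne, h1]
    have hBD' : (z - v) / (1 - (starRingEnd ℂ) v * z)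
        * (1 - ((starRingEnd ℂ) u - (starRingEnd ℂ) v) / (1 - v * (starRingEnd ℂ) u)
            * ((z - v) / (1 - (starRingEnd ℂ) v * z))) ≠ 0 := by
      rw [← hconja]; exact mul_ne_zero hBne hD
    rw [hmu]
    simp only [autMap]
    rw [hconjlam, hconja, hadef, hexpadd]
    rw [keyA u v z ((starRingEnd ℂ) u) ((starRingEnd ℂ) v) hcuz hcvz hzv hvu' hvu'' hBD']
    exact keyB u v z ((starRingEnd ℂ) u) ((starRingEnd ℂ) v) _ _ hcuz hcvz hzv hvu' hvu'' huv
  -- square of distance of conj lam * μ to 1, for unimodular μ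
  have habsmu : ∀ μ : ℂ, Complex.abs μ = 1 →
      Complex.abs ((starRingEnd ℂ) lam * μ - 1) ^ 2
        = 2 - 2 * (lam.re * μ.re + lam.im * μ.im) := by
    intro μ hμ
    have hm2 : μ.re ^ 2 + μ.im ^ 2 = 1 := by
      have h := Complex.normSq_eq_abs μ
      rw [hμ, Complex.normSq_apply] at h
      linear_combination h
    rw [Complex.sq_abs, Complex.normSq_apply]
    simp only [Complex.sub_re, Complex.sub_im, Complex.mul_re, Complex.mul_im,
      Complex.conj_re, Complex.conj_im, Complex.one_re, Complex.one_im]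
    linear_combination (μ.re ^ 2 + μ.im ^ 2) * hl2 + hm2
  -- angle comparison
  have hangle : ∀ μ : ℂ, Complex.abs μ = 1 → 1 - 2 * ρ ^ 2 ≤ μ.re →
      Real.cos (θ + α) ≤ lam.re * μ.re + lam.im * μ.im := by
    intro μ hμ1 hμre
    have hμne : μ ≠ 0 := by intro h0; rw [h0, map_zero] at hμ1; norm_num at hμ1
    have hargμ : |μ.arg| ≤ α := by
      by_contra hc
      push_neg at hc
      have h2 := Real.cos_lt_cos_of_nonneg_of_le_pi hα0 (Complex.abs_arg_le_pi μ) hc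
      rw [Real.cos_abs, Complex.cos_arg hμne, Complex.norm_eq_abs, hμ1, div_one, hα1] at h2
      linarith
    have hlexp : ((1 : ℝ) : ℂ) * Complex.exp ((lam.arg : ℂ) * Complex.I) = lam := by
      rw [← hlam1, Complex.abs_mul_exp_arg_mul_I]
    have hmexp : ((1 : ℝ) : ℂ) * Complex.exp ((μ.arg : ℂ) * Complex.I) = μ := by
      rw [← hμ1, Complex.abs_mul_exp_arg_mul_I]
    rw [Complex.ofReal_one, one_mul] at hlexp hmexp
    have hprod : (starRingEnd ℂ) lam * μ
        = Complex.exp (((μ.arg - lam.arg : ℝ) : ℂ) * Complex.I) := by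
      have hstep : (starRingEnd ℂ) lam * μ
          = (starRingEnd ℂ) (Complex.exp ((lam.arg : ℂ) * Complex.I))
            * Complex.exp ((μ.arg : ℂ) * Complex.I) := by rw [hlexp, hmexp]
      rw [hstep, ← Complex.exp_conj, ← Complex.exp_add]
      congr 1
      rw [map_mul, Complex.conj_I, Complex.conj_ofReal]
      push_cast
      ring
    have hrecos := congrArg Complex.re hprod
    rw [Complex.exp_ofReal_mul_I_re] at hrecos
    have hre2 : ((starRingEnd ℂ) lam * μ).re = lam.re * μ.re + lam.im * μ.im := by
      simp only [Complex.mul_re, Complex.conj_re, Complex.conj_im]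
      ring
    rw [hre2] at hrecos
    rw [hrecos, ← Real.cos_abs (μ.arg - lam.arg)]
    apply Real.cos_le_cos_of_nonneg_of_le_pi (abs_nonneg _) hsum.le
    have h3 : |μ.arg - lam.arg| ≤ |μ.arg| + |lam.arg| := by
      calc |μ.arg - lam.arg| = |μ.arg + -lam.arg| := by rw [sub_eq_add_neg]
        _ ≤ |μ.arg| + |(-lam.arg)| := abs_add_le _ _
        _ = |μ.arg| + |lam.arg| := by rw [abs_neg]
    rw [hθdef]
    linarith
  -- unimodularity and real-part bound for μ on the circle
  have hmufacts : ∀ z : ℂ, Complex.abs z = 1 →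
      Complex.abs ((starRingEnd ℂ)
            (1 - (starRingEnd ℂ) a * ((z - v) / (1 - (starRingEnd ℂ) v * z)))
          / (1 - (starRingEnd ℂ) a * ((z - v) / (1 - (starRingEnd ℂ) v * z)))) = 1
        ∧ 1 - 2 * ρ ^ 2 ≤ ((starRingEnd ℂ)
            (1 - (starRingEnd ℂ) a * ((z - v) / (1 - (starRingEnd ℂ) v * z)))
          / (1 - (starRingEnd ℂ) a * ((z - v) / (1 - (starRingEnd ℂ) v * z)))).re := by
    intro z hz
    have hBabs := hBfact z hz
    have hD : (1 : ℂ) - (starRingEnd ℂ) a * ((z - v) / (1 - (starRingEnd ℂ) v * z)) ≠ 0 :=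
      one_sub_mul_ne hca1 (le_of_eq hBabs)
    set D : ℂ := 1 - (starRingEnd ℂ) a * ((z - v) / (1 - (starRingEnd ℂ) v * z)) with hDdef
    constructor
    · rw [map_div₀, Complex.abs_conj, div_self]
      exact Complex.abs.ne_zero hD
    · set x : ℝ := ((starRingEnd ℂ) a * ((z - v) / (1 - (starRingEnd ℂ) v * z))).re with hxdef
      set y : ℝ := ((starRingEnd ℂ) a * ((z - v) / (1 - (starRingEnd ℂ) v * z))).im with hydef
      have hxy : x ^ 2 + y ^ 2 = ρ ^ 2 := by
        have habs2 : Complex.abs ((starRingEnd ℂ) a * ((z - v) / (1 - (starRingEnd ℂ) v * z)))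
            = ρ := by rw [map_mul, Complex.abs_conj, ha, hBabs, mul_one]
        have h := Complex.normSq_eq_abs
          ((starRingEnd ℂ) a * ((z - v) / (1 - (starRingEnd ℂ) v * z)))
        rw [habs2, Complex.normSq_apply] at h
        linear_combination h
      have hDre : D.re = 1 - x := by rw [hDdef, Complex.sub_re, Complex.one_re, hxdef]
      have hDim : D.im = -y := by rw [hDdef, Complex.sub_im, Complex.one_im, hydef]; ring
      have hnsq : Complex.normSq D = (1 - x) ^ 2 + y ^ 2 := by
        rw [Complex.normSq_apply, hDre, hDim]; ring
      have hnsqpos : (0 : ℝ) < (1 - x) ^ 2 + y ^ 2 := by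
        rw [← hnsq]; exact Complex.normSq_pos.mpr hD
      have hμre : ((starRingEnd ℂ) D / D).re = ((1 - x) ^ 2 - y ^ 2) / ((1 - x) ^ 2 + y ^ 2) := by
        rw [Complex.div_re, hnsq, Complex.conj_re, Complex.conj_im, hDre, hDim]
        ring
      clear_value x y D
      rw [hμre, le_div_iff₀ hnsqpos]
      have hkey2 : (1 - x) ^ 2 - y ^ 2 - (1 - 2 * ρ ^ 2) * ((1 - x) ^ 2 + y ^ 2)
          = 2 * (x - ρ ^ 2) ^ 2 := by linear_combination (2 * ρ ^ 2 - 2) * hxy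
      linarith [hkey2, sq_nonneg (x - ρ ^ 2)]
  -- the pointwise bound on the circle
  have hcircle : ∀ z : ℂ, Complex.abs z = 1 →
      Complex.abs (autMap ξ u z - autMap η v z) ≤ RHSval := by
    intro z hz
    obtain ⟨hμ1, hμ2⟩ := hmufacts z hz
    rw [hkey z hz, map_mul, map_mul, hexp1, hBfact z hz, one_mul, one_mul]
    have h2 := habsmu _ hμ1
    have h3 := hangle _ hμ1 hμ2
    have h4 : Complex.abs ((starRingEnd ℂ) lam
        * ((starRingEnd ℂ)
            (1 - (starRingEnd ℂ) a * ((z - v) / (1 - (starRingEnd ℂ) v * z)))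
          / (1 - (starRingEnd ℂ) a * ((z - v) / (1 - (starRingEnd ℂ) v * z)))) - 1) ^ 2
        ≤ RHSval ^ 2 := by
      rw [h2, hM2]; linarith
    exact le_of_pow_le_pow_left₀ two_ne_zero hRHS0 h4
  -- maximum modulus principle: bound on the whole closed disk
  have hdAux : ∀ (t : ℝ) (wc : ℂ), Complex.abs wc < 1 →
      DifferentiableOn ℂ (autMap t wc) (Metric.closedBall (0 : ℂ) 1) := by
    intro t wc hwc
    have hne : ∀ z ∈ Metric.closedBall (0 : ℂ) 1, (1 : ℂ) - (starRingEnd ℂ) wc * z ≠ 0 := by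
      intro z hz
      exact one_sub_mul_ne (by rwa [Complex.abs_conj]) (by
        simpa [Complex.dist_eq, Complex.norm_eq_abs] using Metric.mem_closedBall.mp hz)
    show DifferentiableOn ℂ
      (fun z => Complex.exp (Complex.I * (t : ℂ)) * ((z - wc) / (1 - (starRingEnd ℂ) wc * z)))
      (Metric.closedBall (0 : ℂ) 1)
    have d1 : DifferentiableOn ℂ (fun z : ℂ => z - wc) (Metric.closedBall (0 : ℂ) 1) :=
      (differentiable_id.sub_const wc).differentiableOn
    have d2 : DifferentiableOn ℂ (fun z : ℂ => 1 - (starRingEnd ℂ) wc * z)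
        (Metric.closedBall (0 : ℂ) 1) :=
      ((differentiable_const (1 : ℂ)).sub
        ((differentiable_const _).mul differentiable_id)).differentiableOn
    exact (d1.div d2 hne).const_mul _
  have hdisk : ∀ z : ℂ, Complex.abs z ≤ 1 →
      Complex.abs (autMap ξ u z - autMap η v z) ≤ RHSval := by
    have hdiff : DiffContOnCl ℂ (fun z => autMap ξ u z - autMap η v z)
        (Metric.ball (0 : ℂ) 1) := by
      apply DifferentiableOn.diffContOnCl
      rw [closure_ball (0 : ℂ) one_ne_zero]
      exact (hdAux ξ u hu1).sub (hdAux η v hv1)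
    intro z hz
    have h1 : ‖(fun z => autMap ξ u z - autMap η v z) z‖ ≤ RHSval := by
      apply Complex.norm_le_of_forall_mem_frontier_norm_le Metric.isBounded_ball hdiff
      · intro w hw
        rw [frontier_ball (0 : ℂ) one_ne_zero] at hw
        have hw1 : Complex.abs w = 1 := by
          simpa [Complex.dist_eq, Complex.norm_eq_abs] using hw
        simpa [Complex.norm_eq_abs] using hcircle w hw1
      · rw [closure_ball (0 : ℂ) one_ne_zero]
        simpa [Complex.dist_eq, Complex.norm_eq_abs] using hz
    simpa [Complex.norm_eq_abs] using h1
  -- construction of the maximizing boundary point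
  set σ : ℝ := if 0 ≤ lam.im then 1 else -1 with hσdef
  have hσ2 : σ ^ 2 = 1 := by rw [hσdef]; split_ifs <;> norm_num
  have hσim : σ * lam.im = |lam.im| := by
    rw [hσdef]; split_ifs with h
    · rw [one_mul, _root_.abs_of_nonneg h]
    · rw [neg_one_mul, _root_.abs_of_neg (lt_of_not_ge h)]
  clear_value σ
  have hσ2c : ((σ : ℝ) : ℂ) ^ 2 = 1 := by
    rw [show ((σ : ℝ) : ℂ) ^ 2 = ((σ ^ 2 : ℝ) : ℂ) by push_cast; ring, hσ2]; norm_num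
  have hs2c : ((s : ℝ) : ℂ) ^ 2 = 1 - ((ρ : ℝ) : ℂ) ^ 2 := by
    rw [show ((s : ℝ) : ℂ) ^ 2 = ((s ^ 2 : ℝ) : ℂ) by push_cast; ring, hs2]; push_cast; ring
  obtain ⟨w, hwabs, hwa⟩ : ∃ w : ℂ, Complex.abs w = 1
      ∧ (starRingEnd ℂ) a * w
        = ((ρ : ℝ) : ℂ) ^ 2 - ((σ : ℝ) : ℂ) * ((ρ : ℝ) : ℂ) * ((s : ℝ) : ℂ) * Complex.I := by
    by_cases hρz : ρ = 0
    · refine ⟨1, by simp, ?_⟩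
      have haz : a = 0 := by
        have h0 : Complex.abs a = 0 := by rw [ha, hρz]
        exact (map_eq_zero Complex.abs).mp h0
      rw [haz, map_zero, zero_mul, hρz]
      push_cast; ring
    · have hρc : ((ρ : ℝ) : ℂ) ≠ 0 := by
        simpa using hρz
      refine ⟨a * (((ρ : ℝ) : ℂ) - ((σ : ℝ) : ℂ) * ((s : ℝ) : ℂ) * Complex.I) / ((ρ : ℝ) : ℂ),
        ?_, ?_⟩
      · rw [map_div₀, map_mul]
        have h1 : Complex.abs (((ρ : ℝ) : ℂ) - ((σ : ℝ) : ℂ) * ((s : ℝ) : ℂ) * Complex.I)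
            = 1 := by
          rw [show ((ρ : ℝ) : ℂ) - ((σ : ℝ) : ℂ) * ((s : ℝ) : ℂ) * Complex.I
              = ((ρ : ℝ) : ℂ) + ((-(σ * s) : ℝ) : ℂ) * Complex.I by push_cast; ring]
          rw [Complex.abs_add_mul_I]
          rw [show ρ ^ 2 + (-(σ * s)) ^ 2 = ρ ^ 2 + σ ^ 2 * s ^ 2 by ring, hσ2, hs2]
          rw [show ρ ^ 2 + 1 * (1 - ρ ^ 2) = 1 by ring]
          exact Real.sqrt_one
        rw [h1, ha, Complex.abs_ofReal, _root_.abs_of_nonneg hρ0, mul_one, div_self hρz]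
      · have hnsa : (starRingEnd ℂ) a * a = ((ρ : ℝ) : ℂ) ^ 2 := by
          rw [mul_comm, Complex.mul_conj, Complex.normSq_eq_abs, ha]
          push_cast; ring
        rw [mul_div_assoc', ← mul_assoc, hnsa]
        field_simp
  -- the boundary point z₀
  set z₀ : ℂ := (w + v) / (1 + (starRingEnd ℂ) v * w) with hz₀def
  have hden : (1 : ℂ) + (starRingEnd ℂ) v * w ≠ 0 := by
    intro h0
    have h1 : (starRingEnd ℂ) v * w = -1 := by linear_combination h0
    have h2 := congrArg Complex.abs h1
    rw [map_mul, Complex.abs_conj, hwabs, mul_one] at h2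
    rw [show Complex.abs (-1 : ℂ) = 1 by simp] at h2
    rw [h2] at hv1; exact lt_irrefl _ hv1
  have hww : w * (starRingEnd ℂ) w = 1 := by
    rw [Complex.mul_conj, Complex.normSq_eq_abs, hwabs]; norm_num
  have hz₀abs : Complex.abs z₀ = 1 := by
    have h1 : (starRingEnd ℂ) w * (w + v) = 1 + (starRingEnd ℂ) w * v := by
      linear_combination hww
    have h2 : Complex.abs (w + v) = Complex.abs (1 + (starRingEnd ℂ) v * w) := by
      calc Complex.abs (w + v)
          = Complex.abs ((starRingEnd ℂ) w) * Complex.abs (w + v) := by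
            rw [Complex.abs_conj, hwabs, one_mul]
        _ = Complex.abs ((starRingEnd ℂ) w * (w + v)) := (map_mul Complex.abs _ _).symm
        _ = Complex.abs (1 + (starRingEnd ℂ) w * v) := by rw [h1]
        _ = Complex.abs ((starRingEnd ℂ) (1 + (starRingEnd ℂ) w * v)) :=
            (Complex.abs_conj _).symm
        _ = Complex.abs (1 + (starRingEnd ℂ) v * w) := by
            rw [map_add, map_one, map_mul, Complex.conj_conj, mul_comm w ((starRingEnd ℂ) v)]
    rw [hz₀def, map_div₀, h2, div_self]
    exact Complex.abs.ne_zero hden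
  have hvv : (1 : ℂ) - (starRingEnd ℂ) v * v ≠ 0 := one_sub_mul_ne hcv1 hv1.le
  have hBz₀ : (z₀ - v) / (1 - (starRingEnd ℂ) v * z₀) = w := by
    have hden' : (1 : ℂ) + w * (starRingEnd ℂ) v ≠ 0 := by rwa [mul_comm]
    have e1 : z₀ - v = w * (1 - (starRingEnd ℂ) v * v) / (1 + (starRingEnd ℂ) v * w) := by
      rw [hz₀def]; field_simp; ring
    have e2 : 1 - (starRingEnd ℂ) v * z₀
        = (1 - (starRingEnd ℂ) v * v) / (1 + (starRingEnd ℂ) v * w) := by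
      rw [hz₀def]; field_simp; ring
    rw [e1, e2]
    rw [div_div_div_cancel_right₀]
    · exact mul_div_cancel_right₀ w hvv
    · exact hden
  clear_value z₀
  -- value of the distance at the boundary point
  have hD0 : (1 : ℂ) - (starRingEnd ℂ) a * w ≠ 0 := one_sub_mul_ne hca1 hwabs.le
  have hz₀val : Complex.abs (autMap ξ u z₀ - autMap η v z₀) = RHSval := by
    have hμz₀ : (starRingEnd ℂ)
          (1 - (starRingEnd ℂ) a * ((z₀ - v) / (1 - (starRingEnd ℂ) v * z₀)))
          / (1 - (starRingEnd ℂ) a * ((z₀ - v) / (1 - (starRingEnd ℂ) v * z₀)))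
        = ((1 - 2 * ρ ^ 2 : ℝ) : ℂ)
          - 2 * ((σ : ℝ) : ℂ) * ((ρ : ℝ) : ℂ) * ((s : ℝ) : ℂ) * Complex.I := by
      rw [hBz₀, hwa]
      have hD0' : (1 : ℂ) - (((ρ : ℝ) : ℂ) ^ 2
          - ((σ : ℝ) : ℂ) * ((ρ : ℝ) : ℂ) * ((s : ℝ) : ℂ) * Complex.I) ≠ 0 := by
        rw [← hwa]; exact hD0
      rw [div_eq_iff hD0']
      have hconjD : (starRingEnd ℂ) ((1 : ℂ) - (((ρ : ℝ) : ℂ) ^ 2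
            - ((σ : ℝ) : ℂ) * ((ρ : ℝ) : ℂ) * ((s : ℝ) : ℂ) * Complex.I))
          = 1 - (((ρ : ℝ) : ℂ) ^ 2
            + ((σ : ℝ) : ℂ) * ((ρ : ℝ) : ℂ) * ((s : ℝ) : ℂ) * Complex.I) := by
        simp only [map_sub, map_mul, map_one, map_pow, Complex.conj_ofReal, Complex.conj_I]
        ring
      rw [hconjD]
      have hI : Complex.I ^ 2 = -1 := Complex.I_sq
      push_cast
      linear_combination (2 * ((ρ : ℝ) : ℂ) ^ 2 * ((s : ℝ) : ℂ) ^ 2 * Complex.I ^ 2) * hσ2c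
        + (2 * ((ρ : ℝ) : ℂ) ^ 2 * Complex.I ^ 2) * hs2c
        + (2 * ((ρ : ℝ) : ℂ) ^ 2 * (1 - ((ρ : ℝ) : ℂ) ^ 2)) * hI
    have hc₀abs : Complex.abs (((1 - 2 * ρ ^ 2 : ℝ) : ℂ)
        - 2 * ((σ : ℝ) : ℂ) * ((ρ : ℝ) : ℂ) * ((s : ℝ) : ℂ) * Complex.I) = 1 := by
      rw [show ((1 - 2 * ρ ^ 2 : ℝ) : ℂ)
            - 2 * ((σ : ℝ) : ℂ) * ((ρ : ℝ) : ℂ) * ((s : ℝ) : ℂ) * Complex.I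
          = ((1 - 2 * ρ ^ 2 : ℝ) : ℂ) + ((-(2 * σ * ρ * s) : ℝ) : ℂ) * Complex.I by
        push_cast; ring]
      rw [Complex.abs_add_mul_I]
      rw [show (1 - 2 * ρ ^ 2) ^ 2 + (-(2 * σ * ρ * s)) ^ 2 = 1 by linear_combination (4 * ρ ^ 2 * s ^ 2) * hσ2 + (4 * ρ ^ 2) * hs2]
      exact Real.sqrt_one
    have hc₀re : (((1 - 2 * ρ ^ 2 : ℝ) : ℂ)
        - 2 * ((σ : ℝ) : ℂ) * ((ρ : ℝ) : ℂ) * ((s : ℝ) : ℂ) * Complex.I).re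
        = 1 - 2 * ρ ^ 2 := by
      simp [Complex.sub_re, Complex.mul_re, Complex.mul_im, Complex.ofReal_re,
        Complex.ofReal_im, Complex.I_re, Complex.I_im]
      norm_cast
    have hc₀im : (((1 - 2 * ρ ^ 2 : ℝ) : ℂ)
        - 2 * ((σ : ℝ) : ℂ) * ((ρ : ℝ) : ℂ) * ((s : ℝ) : ℂ) * Complex.I).im
        = -(2 * σ * ρ * s) := by
      simp [Complex.sub_im, Complex.mul_re, Complex.mul_im, Complex.ofReal_re,
        Complex.ofReal_im, Complex.I_re, Complex.I_im]
      norm_cast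
    have hsq : Complex.abs ((starRingEnd ℂ) lam * (((1 - 2 * ρ ^ 2 : ℝ) : ℂ)
        - 2 * ((σ : ℝ) : ℂ) * ((ρ : ℝ) : ℂ) * ((s : ℝ) : ℂ) * Complex.I) - 1) ^ 2
        = RHSval ^ 2 := by
      rw [habsmu _ hc₀abs, hM2, hc₀re, hc₀im, Real.cos_add, hα1, hα2, ← hre, ← him]
      linear_combination (4 * ρ * s) * hσim
    rw [hkey z₀ hz₀abs, map_mul, map_mul, hexp1, hBfact z₀ hz₀abs, one_mul, one_mul, hμz₀]
    calc Complex.abs ((starRingEnd ℂ) lam * (((1 - 2 * ρ ^ 2 : ℝ) : ℂ)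
          - 2 * ((σ : ℝ) : ℂ) * ((ρ : ℝ) : ℂ) * ((s : ℝ) : ℂ) * Complex.I) - 1)
        = Real.sqrt (Complex.abs ((starRingEnd ℂ) lam * (((1 - 2 * ρ ^ 2 : ℝ) : ℂ)
          - 2 * ((σ : ℝ) : ℂ) * ((ρ : ℝ) : ℂ) * ((s : ℝ) : ℂ) * Complex.I) - 1) ^ 2) :=
          (Real.sqrt_sq (Complex.abs.nonneg _)).symm
      _ = Real.sqrt (RHSval ^ 2) := by rw [hsq]
      _ = RHSval := Real.sqrt_sq hRHS0
  -- conclusion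
  haveI : Nonempty unitDisk := ⟨⟨0, by simp [unitDisk]⟩⟩
  have hbdd : BddAbove (Set.range fun z : unitDisk =>
      Complex.abs (autMap ξ u ↑z - autMap η v ↑z)) := by
    refine ⟨RHSval, ?_⟩
    rintro x ⟨z, rfl⟩
    exact hdisk z (le_of_lt z.2)
  have hcontAut : ∀ (t : ℝ) (wc : ℂ), Complex.abs wc < 1 → ∀ zz : ℂ, Complex.abs zz ≤ 1 →
      ContinuousAt (autMap t wc) zz := by
    intro t wc hwc zz hzz
    show ContinuousAt (fun z => Complex.exp (Complex.I * (t : ℂ))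
      * ((z - wc) / (1 - (starRingEnd ℂ) wc * z))) zz
    apply ContinuousAt.mul continuousAt_const
    apply ContinuousAt.div
    · exact (continuous_id.sub continuous_const).continuousAt
    · exact (continuous_const.sub (continuous_const.mul continuous_id)).continuousAt
    · exact one_sub_mul_ne (by rwa [Complex.abs_conj]) hzz
  apply le_antisymm
  · exact ciSup_le fun z => hdisk z (le_of_lt z.2)
  · have h1z : ((1 : ℝ) : ℂ) * z₀ = z₀ := by rw [Complex.ofReal_one, one_mul]
    have hcont : ContinuousAt (fun r : ℝ =>
        Complex.abs (autMap ξ u ((r : ℂ) * z₀) - autMap η v ((r : ℂ) * z₀))) 1 := by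
      apply Complex.continuous_abs.continuousAt.comp
      apply ContinuousAt.sub
      · have hg : ContinuousAt (fun r : ℝ => (r : ℂ) * z₀) 1 :=
          (Complex.continuous_ofReal.mul continuous_const).continuousAt
        have hf1 : ContinuousAt (autMap ξ u) ((fun r : ℝ => (r : ℂ) * z₀) 1) := by
          show ContinuousAt (autMap ξ u) (((1 : ℝ) : ℂ) * z₀)
          rw [h1z]; exact hcontAut ξ u hu1 z₀ hz₀abs.le
        exact ContinuousAt.comp (f := fun r : ℝ => (r : ℂ) * z₀) hf1 hg
      · have hg : ContinuousAt (fun r : ℝ => (r : ℂ) * z₀) 1 :=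
          (Complex.continuous_ofReal.mul continuous_const).continuousAt
        have hf1 : ContinuousAt (autMap η v) ((fun r : ℝ => (r : ℂ) * z₀) 1) := by
          show ContinuousAt (autMap η v) (((1 : ℝ) : ℂ) * z₀)
          rw [h1z]; exact hcontAut η v hv1 z₀ hz₀abs.le
        exact ContinuousAt.comp (f := fun r : ℝ => (r : ℂ) * z₀) hf1 hg
    have htend : Filter.Tendsto (fun r : ℝ =>
        Complex.abs (autMap ξ u ((r : ℂ) * z₀) - autMap η v ((r : ℂ) * z₀)))
        (nhdsWithin 1 (Set.Iio 1)) (nhds RHSval) := by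
      have h0 : Filter.Tendsto (fun r : ℝ =>
          Complex.abs (autMap ξ u ((r : ℂ) * z₀) - autMap η v ((r : ℂ) * z₀)))
          (nhdsWithin 1 (Set.Iio 1))
          (nhds (Complex.abs (autMap ξ u (((1 : ℝ) : ℂ) * z₀)
            - autMap η v (((1 : ℝ) : ℂ) * z₀)))) :=
        hcont.tendsto.mono_left nhdsWithin_le_nhds
      rwa [h1z, hz₀val] at h0
    refine le_of_tendsto htend ?_
    filter_upwards [Ioo_mem_nhdsLT_of_mem
      (show (1 : ℝ) ∈ Set.Ioc (0 : ℝ) 1 by constructor <;> norm_num)] with r hr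
    have hmem : ((r : ℂ) * z₀) ∈ unitDisk := by
      show Complex.abs ((r : ℂ) * z₀) < 1
      rw [map_mul, Complex.abs_ofReal, hz₀abs, mul_one, _root_.abs_of_pos hr.1]
      exact hr.2
    exact le_ciSup hbdd ⟨_, hmem⟩
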